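/- Let R be a semiprime right Goldie ring such that the right R-module R_R has couniserial dimension. If u.dim(R_R) = n, then R_R decomposes as a direct sum of n uniform right ideals. -/

import Mathlib

universe u v w

/-- A module is *uniform* if it is nonzero and any two nonzero submodules intersect
nontrivially. -/
def IsUniformModule (R : Type u) [Ring R] (M : Type v) [AddCommGroup M] [Module R M] : Prop :=
  Nontrivial M ∧ ∀ N₁ N₂ : Submodule R M, N₁ ≠ ⊥ → N₂ ≠ ⊥ → N₁ ⊓ N₂ ≠ ⊥

/-- The classes `ζ_α`, defined by transfinite induction: `ζ_1` is the class of uniform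
modules, and for `α > 1`, `M ∈ ζ_α` iff every nonzero submodule `N` of `M` with `N ≇ M`
lies in `ζ_β` for some `β < α`. -/
def ModuleZeta (R : Type u) [Ring R] (α : Ordinal.{v}) (M : Type v) [AddCommGroup M]
    [Module R M] : Prop :=
  (α = 1 ∧ IsUniformModule R M) ∨
    (1 < α ∧ ∀ N : Submodule R M, N ≠ ⊥ → ¬ Nonempty (N ≃ₗ[R] M) →
      ∃ β, ∃ _ : β < α, ModuleZeta R β N)
termination_by α

/-- A module has couniserial dimension iff it lies in `ζ_α` for some ordinal `α`. -/
def HasCUDim (R : Type u) [Ring R] (M : Type v) [AddCommGroup M] [Module R M] : Prop :=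
  ∃ α : Ordinal.{v}, ModuleZeta R α M

open Classical in
/-- The couniserial dimension of a module: the least `α` with `M ∈ ζ_α`, with the
convention that the zero module has couniserial dimension `0`. -/
noncomputable def cuDim (R : Type u) [Ring R] (M : Type v) [AddCommGroup M] [Module R M] :
    Ordinal.{v} :=
  if Subsingleton M then 0 else sInf {α | ModuleZeta R α M}

/-- A submodule is *essential* if it meets every nonzero submodule nontrivially. -/
def IsEssentialSubmodule (R : Type u) [Ring R] {M : Type v} [AddCommGroup M] [Module R M]
    (N : Submodule R M) : Prop :=
  ∀ K : Submodule R M, K ≠ ⊥ → N ⊓ K ≠ ⊥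

/-- A module is *indecomposable* if it is nonzero and is not an (internal) direct sum of two
nonzero submodules. -/
def IsIndecomposableModule (R : Type u) [Ring R] (M : Type v) [AddCommGroup M]
    [Module R M] : Prop :=
  Nontrivial M ∧ ∀ A B : Submodule R M, IsCompl A B → A = ⊥ ∨ B = ⊥

/-- A module is *coHopfian* if it is not isomorphic to a proper submodule of itself. -/
def IsCoHopfianModule (R : Type u) [Ring R] (M : Type v) [AddCommGroup M] [Module R M] : Prop :=
  ∀ N : Submodule R M, Nonempty (M ≃ₗ[R] N) → N = ⊤

/-- A module is *fully coHopfian* if every submodule is coHopfian. -/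
def IsFullyCoHopfianModule (R : Type u) [Ring R] (M : Type v) [AddCommGroup M]
    [Module R M] : Prop :=
  ∀ N : Submodule R M, IsCoHopfianModule R N

/-- A module `N` has the *cancellation property* if `N ⊕ A ≅ N ⊕ B` implies `A ≅ B`. -/
def HasCancellation (R : Type u) [Ring R] (N : Type v) [AddCommGroup N] [Module R N] : Prop :=
  ∀ (A B : Type v) [AddCommGroup A] [Module R A] [AddCommGroup B] [Module R B],
    Nonempty ((N × A) ≃ₗ[R] (N × B)) → Nonempty (A ≃ₗ[R] B)

/-- A module is *Dedekind finite* if it is not isomorphic to a proper direct summand of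
itself. -/
def IsDedekindFiniteModule (R : Type u) [Ring R] (M : Type v) [AddCommGroup M]
    [Module R M] : Prop :=
  ∀ A B : Submodule R M, IsCompl A B → Nonempty (M ≃ₗ[R] A) → B = ⊥

/-- A ring is *semiprime* if it has no nonzero nilpotent two-sided ideal; equivalently,
`a R a = 0` implies `a = 0`. -/
def IsSemiprimeRing (R : Type u) [Ring R] : Prop :=
  ∀ a : R, (∀ x : R, a * x * a = 0) → a = 0

/-- An ideal is an *annihilator ideal* if it is the annihilator of a subset of the ring. -/
def IsAnnihilatorIdeal (R : Type u) [Ring R] (I : Ideal R) : Prop :=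
  ∃ S : Set R, (I : Set R) = {x : R | ∀ s ∈ S, x * s = 0}

/-- A module has *uniform dimension `n`* if it contains `n` independent uniform submodules
whose direct sum is essential. -/
def HasFiniteUniformDim (R : Type u) [Ring R] (M : Type v) [AddCommGroup M] [Module R M]
    (n : ℕ) : Prop :=
  ∃ U : Fin n → Submodule R M, iSupIndep U ∧ (∀ i, IsUniformModule R (U i)) ∧
    IsEssentialSubmodule R (⨆ i, U i)

/-- A ring is *Goldie* if it has the ascending chain condition on annihilator ideals and
finite uniform dimension as a module over itself. -/
def IsGoldieRing (R : Type u) [Ring R] : Prop :=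
  (∀ f : ℕ → Ideal R, (∀ n, IsAnnihilatorIdeal R (f n)) → Monotone f →
      ∃ n, ∀ k, n ≤ k → f k = f n) ∧
    ∃ n : ℕ, HasFiniteUniformDim R R n

section PartA
variable {R : Type u} [Ring R] {M : Type v} [AddCommGroup M] [Module R M]
variable {N : Type v} [AddCommGroup N] [Module R N]

lemma subm_ne_bot_iff (p : Submodule R M) : p ≠ ⊥ ↔ Nontrivial p := by
  rw [Submodule.ne_bot_iff]
  constructor
  · rintro ⟨x, hx, h0⟩
    exact ⟨⟨x, hx⟩, 0, by simpa using h0⟩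
  · rintro ⟨a, b, hab⟩
    rcases eq_or_ne (a : M) 0 with h | h
    · refine ⟨b, b.2, fun hb => hab ?_⟩
      apply Subtype.ext; rw [h, hb]
    · exact ⟨a, a.2, h⟩

lemma map_ne_bot_iff {f : M →ₗ[R] N} (hf : Function.Injective f) {p : Submodule R M} :
    Submodule.map f p ≠ ⊥ ↔ p ≠ ⊥ := by
  constructor
  · intro h hb; exact h (by rw [hb, Submodule.map_bot])
  · intro h hb
    exact h (Submodule.map_injective_of_injective hf (by rw [hb, Submodule.map_bot]))

lemma uniform_of_equiv (e : M ≃ₗ[R] N) (h : IsUniformModule R M) : IsUniformModule R N := by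
  obtain ⟨hnt, hu⟩ := h
  refine ⟨e.toEquiv.symm.nontrivial, fun N₁ N₂ h1 h2 => ?_⟩
  have key : ∀ p : Submodule R N, p ≠ ⊥ → Submodule.comap (e : M →ₗ[R] N) p ≠ ⊥ := by
    intro p hp hb
    apply hp
    calc p = Submodule.map (e : M →ₗ[R] N) (Submodule.comap (e : M →ₗ[R] N) p) :=
            (Submodule.map_comap_eq_of_surjective e.surjective p).symm
      _ = ⊥ := by rw [hb, Submodule.map_bot]
  have := hu _ _ (key _ h1) (key _ h2)
  rw [← Submodule.comap_inf] at this
  intro hb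
  exact this (by rw [hb, Submodule.comap_bot, LinearEquiv.ker])

/-- Uniformity of a submodule, in terms of submodules of the ambient module. -/
lemma uniform_submodule_iff (p : Submodule R M) :
    IsUniformModule R p ↔ p ≠ ⊥ ∧
      ∀ A B : Submodule R M, A ≤ p → B ≤ p → A ≠ ⊥ → B ≠ ⊥ → A ⊓ B ≠ ⊥ := by
  have hinj : Function.Injective p.subtype := Subtype.coe_injective
  constructor
  · rintro ⟨hnt, hu⟩
    refine ⟨(subm_ne_bot_iff p).2 hnt, fun A B hA hB hA0 hB0 => ?_⟩
    have mA : Submodule.map p.subtype (Submodule.comap p.subtype A) = A := by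
      rw [Submodule.map_comap_subtype, inf_eq_right.2 hA]
    have mB : Submodule.map p.subtype (Submodule.comap p.subtype B) = B := by
      rw [Submodule.map_comap_subtype, inf_eq_right.2 hB]
    have hA' : Submodule.comap p.subtype A ≠ ⊥ := by
      intro hb; apply hA0; rw [← mA, hb, Submodule.map_bot]
    have hB' : Submodule.comap p.subtype B ≠ ⊥ := by
      intro hb; apply hB0; rw [← mB, hb, Submodule.map_bot]
    have := hu _ _ hA' hB'
    have hmap : Submodule.map p.subtype (Submodule.comap p.subtype A ⊓ Submodule.comap p.subtype B) ≠ ⊥ :=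
      (map_ne_bot_iff hinj).2 this
    refine fun hb => hmap ?_
    rw [Submodule.map_inf _ hinj, mA, mB, hb]
  · rintro ⟨hp, hu⟩
    refine ⟨(subm_ne_bot_iff p).1 hp, fun N₁ N₂ h1 h2 => ?_⟩
    have l1 : Submodule.map p.subtype N₁ ≤ p := Submodule.map_subtype_le p N₁
    have l2 : Submodule.map p.subtype N₂ ≤ p := Submodule.map_subtype_le p N₂
    have := hu _ _ l1 l2 ((map_ne_bot_iff hinj).2 h1) ((map_ne_bot_iff hinj).2 h2)
    rw [← Submodule.map_inf _ hinj] at this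
    exact (map_ne_bot_iff hinj).1 this

/-- `K` is an essential submodule of `N` (relative essentiality inside an ambient module). -/
def EssIn (K L : Submodule R M) : Prop :=
  K ≤ L ∧ ∀ W : Submodule R M, W ≤ L → W ≠ ⊥ → K ⊓ W ≠ ⊥

lemma EssIn.trans {A B C : Submodule R M} (h1 : EssIn A B) (h2 : EssIn B C) : EssIn A C := by
  refine ⟨h1.1.trans h2.1, fun W hW hW0 => ?_⟩
  have hBW : B ⊓ W ≠ ⊥ := h2.2 W hW hW0
  have := h1.2 (B ⊓ W) inf_le_left hBW
  refine fun hb => this (le_bot_iff.1 ?_)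
  rw [← hb]
  exact le_inf inf_le_left (inf_le_right.trans inf_le_right)

lemma essIn_sup_right {K U V : Submodule R M} (h : EssIn K U) (hd : U ⊓ V = ⊥) :
    EssIn (K ⊔ V) (U ⊔ V) := by
  refine ⟨sup_le_sup_right h.1 V, fun W hW hW0 => ?_⟩
  by_cases hWV : W ≤ V
  · rw [inf_eq_right.2 (hWV.trans le_sup_right)]; exact hW0
  · rw [Submodule.ne_bot_iff]
    obtain ⟨w, hwW, hwV⟩ := SetLike.not_le_iff_exists.1 hWV
    obtain ⟨u, hu, v, hv, huv⟩ := Submodule.mem_sup.1 (hW hwW)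
    have hu0 : u ≠ 0 := by rintro rfl; rw [zero_add] at huv; exact hwV (huv ▸ hv)
    have hL0 : U ⊓ (W ⊔ V) ≠ ⊥ := by
      rw [Submodule.ne_bot_iff]
      refine ⟨u, ⟨hu, ?_⟩, hu0⟩
      have : u = w + (-v) := by rw [← huv]; abel
      rw [this]
      exact Submodule.add_mem _ (Submodule.mem_sup_left hwW) (Submodule.mem_sup_right (neg_mem hv))
    obtain ⟨x, hx, hx0⟩ := Submodule.ne_bot_iff _ |>.1 (h.2 _ inf_le_left hL0)
    obtain ⟨hxK, hxU, hxWV⟩ : x ∈ K ∧ x ∈ U ∧ x ∈ W ⊔ V := ⟨hx.1, hx.2.1, hx.2.2⟩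
    obtain ⟨l, hl, v', hv', hlv⟩ := Submodule.mem_sup.1 hxWV
    have hl0 : l ≠ 0 := by
      rintro rfl
      rw [zero_add] at hlv
      apply hx0
      have : x ∈ U ⊓ V := ⟨hxU, hlv ▸ hv'⟩
      rw [hd] at this; exact this
    refine ⟨l, ⟨?_, hl⟩, hl0⟩
    have : l = x + (-v') := by rw [← hlv]; abel
    rw [this]
    exact Submodule.add_mem _ (Submodule.mem_sup_left hxK) (Submodule.mem_sup_right (neg_mem hv'))

lemma essIn_sup {K U K' U' : Submodule R M} (h1 : EssIn K U) (h2 : EssIn K' U')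
    (hd : U ⊓ U' = ⊥) : EssIn (K ⊔ K') (U ⊔ U') := by
  have step1 : EssIn (K' ⊔ K) (U' ⊔ K) := by
    refine essIn_sup_right h2 ?_
    rw [← le_bot_iff, ← hd]
    exact le_inf (inf_le_right.trans h1.1) inf_le_left
  have step2 : EssIn (K ⊔ U') (U ⊔ U') := essIn_sup_right h1 hd
  have : EssIn (K ⊔ K') (K ⊔ U') := by rw [sup_comm K K', sup_comm K U']; exact step1
  exact this.trans step2

end PartA

section PartA2
variable {R : Type u} [Ring R] {M : Type v} [AddCommGroup M] [Module R M]


lemma le_biSup_ne {ι : Type*} (f : ι → Submodule R M) {i k : ι} (h : k ≠ i) :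
    f k ≤ ⨆ (l) (_ : l ≠ i), f l :=
  le_iSup_of_le k (le_iSup (fun _ : k ≠ i => f k) h)

lemma essIn_finset {ι : Type*} [DecidableEq ι] (U K : ι → Submodule R M)
    (hind : iSupIndep U) (hK : ∀ i, EssIn (K i) (U i)) (s : Finset ι) :
    EssIn (⨆ i ∈ s, K i) (⨆ i ∈ s, U i) := by
  classical
  induction s using Finset.induction_on with
  | empty =>
      simp only [Finset.notMem_empty, iSup_false, iSup_bot]
      exact ⟨le_rfl, fun W hW hW0 => absurd (le_bot_iff.1 hW) hW0⟩
  | @insert a s ha IH =>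
      rw [Finset.iSup_insert, Finset.iSup_insert]
      refine essIn_sup (hK a) IH ?_
      have hle : (⨆ i ∈ s, U i) ≤ ⨆ (j) (_ : j ≠ a), U j := by
        refine iSup₂_le fun i hi => ?_
        have : i ≠ a := fun h => ha (h ▸ hi)
        exact le_iSup_of_le i (le_iSup_of_le this le_rfl)
      have := (iSupIndep_def.1 hind a).mono_right hle
      exact this.eq_bot

lemma essIn_top_iff (p : Submodule R M) : EssIn p ⊤ ↔ IsEssentialSubmodule R p := by
  constructor
  · intro h W hW; exact h.2 W le_top hW
  · intro h; exact ⟨le_top, fun W _ hW => h W hW⟩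

/-- In a module which is a finite direct sum of `n` uniform submodules, any `n+1`
independent submodules include a trivial one. -/
lemma UDaux : ∀ (n : ℕ) (M : Type v) [AddCommGroup M] [Module R M]
    (U : Fin n → Submodule R M), iSupIndep U → (∀ i, IsUniformModule R (U i)) →
    (⨆ i, U i) = ⊤ → ∀ W : Fin (n + 1) → Submodule R M, iSupIndep W → ∃ j, W j = ⊥ := by
  intro n
  induction n with
  | zero =>
      intro M _ _ U hind huni htop W hW
      refine ⟨0, le_bot_iff.1 ?_⟩
      have : (⊤ : Submodule R M) = ⊥ := by
        rw [← htop]; exact le_antisymm (iSup_le fun i => i.elim0) bot_le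
      exact le_top.trans this.le
  | succ m IH =>
      intro M _ _ U hind huni htop W hW
      by_cases hex : ∃ j, W j = ⊥
      · exact hex
      push_neg at hex
      exfalso
      set S : Submodule R M := ⨆ j : Fin (m + 1), W j.succ with hS
      have hSW0 : W 0 ⊓ S = ⊥ := by
        have hle : S ≤ ⨆ (j) (_ : j ≠ (0 : Fin (m + 2))), W j :=
          iSup_le fun j => le_iSup_of_le j.succ (le_iSup_of_le (Fin.succ_ne_zero j) le_rfl)
        exact ((iSupIndep_def.1 hW 0).mono_right hle).eq_bot
      -- there is some i with U i ⊓ S = ⊥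
      have hexU : ∃ i, U i ⊓ S = ⊥ := by
        by_contra hc
        push_neg at hc
        have hess : ∀ i, EssIn (U i ⊓ S) (U i) := by
          intro i
          refine ⟨inf_le_left, fun L hL hL0 => ?_⟩
          have := (uniform_submodule_iff (U i)).1 (huni i)
          exact inf_assoc (U i) S L ▸ (this.2 (U i ⊓ S) L inf_le_left hL (hc i) hL0)
        have := essIn_finset U (fun i => U i ⊓ S) hind hess Finset.univ
        simp only [Finset.mem_univ, iSup_pos, iSup_univ] at this
        rw [htop] at this
        have hSess : EssIn S ⊤ := by
          refine ⟨le_top, fun L hL hL0 => ?_⟩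
          have h2 := this.2 L hL hL0
          refine fun hb => h2 (le_bot_iff.1 ?_)
          rw [← hb]
          refine le_inf ?_ inf_le_right
          exact inf_le_left.trans (iSup_le fun i => inf_le_right)
        have := hSess.2 (W 0) le_top (hex 0)
        rw [inf_comm] at this
        exact this hSW0
      obtain ⟨i, hi⟩ := hexU
      -- pass to the quotient by U i
      let q : M →ₗ[R] M ⧸ U i := (U i).mkQ
      have hkerq : LinearMap.ker q = U i := Submodule.ker_mkQ (U i)
      -- the remaining uniform pieces
      let U' : Fin m → Submodule R (M ⧸ U i) := fun j => Submodule.map q (U (i.succAbove j))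
      have hUdisj : ∀ k : Fin (m + 1), k ≠ i → U k ⊓ U i = ⊥ := by
        intro k hk
        have hle : U i ≤ ⨆ (j) (_ : j ≠ k), U j :=
          le_iSup_of_le i (le_iSup_of_le (Ne.symm hk) le_rfl)
        exact ((iSupIndep_def.1 hind k).mono_right hle).eq_bot
      have hU'uni : ∀ j, IsUniformModule R (U' j) := by
        intro j
        set k := i.succAbove j
        have hk : k ≠ i := Fin.succAbove_ne i j
        have hdk : U k ⊓ U i = ⊥ := hUdisj k hk
        -- U k ≃ map q (U k)
        let f : (U k) →ₗ[R] M ⧸ U i := q.comp (U k).subtype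
        have hfinj : Function.Injective f := by
          rw [← LinearMap.ker_eq_bot]
          ext x
          simp only [LinearMap.mem_ker, Submodule.mem_bot, f, LinearMap.comp_apply]
          rw [← LinearMap.mem_ker, hkerq]
          constructor
          · intro hx
            have : (x : M) ∈ U k ⊓ U i := ⟨x.2, hx⟩
            rw [hdk] at this
            exact Subtype.ext this
          · rintro rfl; simp
        have hrange : LinearMap.range f = U' j := by
          simp only [f, LinearMap.range_comp, Submodule.range_subtype]
          rfl
        have e : (U k) ≃ₗ[R] (U' j) := by
          rw [← hrange]; exact LinearEquiv.ofInjective f hfinj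
        exact uniform_of_equiv e (huni k)
      have hU'ind : iSupIndep U' := by
        rw [iSupIndep_def]
        intro j
        rw [disjoint_iff]
        have hsup : (⨆ (l) (_ : l ≠ j), U' l) = Submodule.map q (⨆ (l) (_ : l ≠ j), U (i.succAbove l)) := by
          rw [Submodule.map_iSup]; exact iSup_congr fun l => by rw [Submodule.map_iSup]
        rw [hsup]
        -- element chase
        rw [eq_bot_iff]
        rintro x ⟨hx1, hx2⟩
        simp only [Submodule.mem_bot]
        obtain ⟨a, ha, rfl⟩ := hx1
        obtain ⟨b, hb, hab⟩ := hx2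
        have hqab : a - b ∈ U i := by
          rw [← hkerq, LinearMap.mem_ker, map_sub, hab, sub_self]
        -- a - b also lies in ⨆_{k ≠ i} U k
        have haU : a ∈ ⨆ (l) (_ : l ≠ i), U l :=
          Submodule.mem_iSup_of_mem _ (Submodule.mem_iSup_of_mem (Fin.succAbove_ne i j) ha)
        have hbU : b ∈ ⨆ (l) (_ : l ≠ i), U l := by
          have hle : (⨆ (l : Fin m) (_ : l ≠ j), U (i.succAbove l)) ≤ ⨆ (l) (_ : l ≠ i), U l :=
            iSup₂_le fun l _ => le_biSup_ne U (Fin.succAbove_ne i l)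
          exact hle hb
        have hdisj : U i ⊓ (⨆ (l) (_ : l ≠ i), U l) = ⊥ := (iSupIndep_def.1 hind i).eq_bot
        have hab0 : a - b = 0 := by
          have : a - b ∈ U i ⊓ (⨆ (l) (_ : l ≠ i), U l) :=
            ⟨hqab, Submodule.sub_mem _ haU hbU⟩
          rw [hdisj] at this; simpa using this
        have hab' : a = b := by rwa [sub_eq_zero] at hab0
        -- now a ∈ U (succAbove j) ⊓ ⨆_{l≠j} ..., use independence of U?? no, of the U (succAbove) family
        have hindep2 : U (i.succAbove j) ⊓ (⨆ (l : Fin m) (_ : l ≠ j), U (i.succAbove l)) = ⊥ := by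
          have hle : (⨆ (l : Fin m) (_ : l ≠ j), U (i.succAbove l)) ≤
              ⨆ (k) (_ : k ≠ i.succAbove j), U k := by
            refine iSup₂_le fun l hl => le_iSup_of_le (i.succAbove l) (le_iSup_of_le ?_ le_rfl)
            exact fun h => hl (Fin.succAbove_right_injective (p := i) h)
          exact ((iSupIndep_def.1 hind (i.succAbove j)).mono_right hle).eq_bot
        have : a ∈ (⊥ : Submodule R M) := hindep2 ▸ ⟨ha, hab' ▸ hb⟩
        rw [Submodule.mem_bot] at this
        rw [this, map_zero]
      have hU'top : (⨆ j, U' j) = ⊤ := by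
        have hsub : (⨆ j, U (i.succAbove j)) ⊔ U i = ⊤ := by
          rw [← htop]
          refine le_antisymm (sup_le (iSup_le fun j => le_iSup U (i.succAbove j)) (le_iSup U i)) ?_
          refine iSup_le fun k => ?_
          rcases eq_or_ne k i with rfl | hk
          · exact le_sup_right
          · obtain ⟨j, rfl⟩ := Fin.exists_succAbove_eq hk
            exact le_sup_left.trans' (le_iSup (fun j => U (i.succAbove j)) j)
        have : (⨆ j, U' j) = Submodule.map q ((⨆ j, U (i.succAbove j)) ⊔ U i) := by
          rw [Submodule.map_sup, Submodule.map_iSup]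
          have : Submodule.map q (U i) = ⊥ := by
            rw [eq_bot_iff]; rintro x ⟨a, ha, rfl⟩
            simp only [Submodule.mem_bot]
            rw [← LinearMap.mem_ker, hkerq]
            exact ha
          rw [this, sup_bot_eq]
        rw [this, hsub, Submodule.map_top, Submodule.range_mkQ]
      -- the images of W (j.succ)
      let W' : Fin (m + 1) → Submodule R (M ⧸ U i) := fun j => Submodule.map q (W j.succ)
      have hWS : ∀ j : Fin (m + 1), W j.succ ≤ S := fun j => le_iSup (fun j : Fin (m+1) => W j.succ) j
      have hW'ind : iSupIndep W' := by
        rw [iSupIndep_def]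
        intro j
        rw [disjoint_iff, eq_bot_iff]
        rintro x ⟨hx1, hx2⟩
        simp only [Submodule.mem_bot]
        obtain ⟨a, ha, rfl⟩ := hx1
        have hsup : (⨆ (l) (_ : l ≠ j), W' l) = Submodule.map q (⨆ (l) (_ : l ≠ j), W l.succ) := by
          rw [Submodule.map_iSup]; exact iSup_congr fun l => by rw [Submodule.map_iSup]
        rw [hsup] at hx2
        obtain ⟨b, hb, hab⟩ := hx2
        have hbS : b ∈ S := by
          revert hb
          exact fun hb => iSup₂_le (fun l hl => hWS l) hb
        have haS : a ∈ S := hWS j ha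
        have hqab : a - b ∈ U i := by
          rw [← hkerq, LinearMap.mem_ker, map_sub, hab, sub_self]
        have : a - b ∈ U i ⊓ S := ⟨hqab, Submodule.sub_mem _ haS hbS⟩
        rw [hi] at this
        have hab' : a = b := by rwa [Submodule.mem_bot, sub_eq_zero] at this
        have hdisj2 : W j.succ ⊓ (⨆ (l : Fin (m+1)) (_ : l ≠ j), W l.succ) = ⊥ := by
          have hle : (⨆ (l : Fin (m+1)) (_ : l ≠ j), W l.succ) ≤
              ⨆ (k) (_ : k ≠ j.succ), W k := by
            refine iSup₂_le fun l hl => le_iSup_of_le l.succ (le_iSup_of_le ?_ le_rfl)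
            exact fun h => hl (Fin.succ_injective _ h)
          exact ((iSupIndep_def.1 hW j.succ).mono_right hle).eq_bot
        have : a ∈ (⊥ : Submodule R M) := hdisj2 ▸ ⟨ha, hab' ▸ hb⟩
        rw [Submodule.mem_bot] at this
        rw [this, map_zero]
      obtain ⟨j, hj⟩ := IH (M ⧸ U i) U' hU'ind hU'uni hU'top W' hW'ind
      -- W j.succ ≤ U i, but also ≤ S, so it is ⊥
      have hWU : W j.succ ≤ U i := by
        intro x hx
        have hmem : q x ∈ Submodule.map q (W j.succ) := ⟨x, hx, rfl⟩
        have hj' : Submodule.map q (W j.succ) = ⊥ := hj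
        rw [hj', Submodule.mem_bot, ← LinearMap.mem_ker, hkerq] at hmem
        exact hmem
      have : W j.succ ≤ ⊥ := by
        rw [← hi]; exact le_inf hWU (hWS j)
      exact hex j.succ (le_bot_iff.1 this)

end PartA2

section PartA3
variable {R : Type u} [Ring R] {M : Type v} [AddCommGroup M] [Module R M]


/-- With uniform dimension `n`, any `n+1` independent submodules include `⊥`. -/
lemma udim_bound {n : ℕ} (h : HasFiniteUniformDim R M n)
    (W : Fin (n + 1) → Submodule R M) (hW : iSupIndep W) : ∃ j, W j = ⊥ := by
  classical
  obtain ⟨U, hind, huni, hess⟩ := h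
  by_cases hex : ∃ j, W j = ⊥
  · exact hex
  push_neg at hex
  exfalso
  set E : Submodule R M := ⨆ i, U i with hE
  have hUle : ∀ i, U i ≤ E := fun i => le_iSup U i
  have hinj : Function.Injective E.subtype := Subtype.coe_injective
  -- comap everything into E
  let U' : Fin n → Submodule R E := fun i => Submodule.comap E.subtype (U i)
  let W' : Fin (n + 1) → Submodule R E := fun j => Submodule.comap E.subtype (E ⊓ W j)
  have hmapU : ∀ i, Submodule.map E.subtype (U' i) = U i := by
    intro i
    rw [Submodule.map_comap_subtype, inf_eq_right.2 (hUle i)]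
  have hmapW : ∀ j, Submodule.map E.subtype (W' j) = E ⊓ W j := by
    intro j
    rw [Submodule.map_comap_subtype, inf_eq_right.2 inf_le_left]
  have hU'uni : ∀ i, IsUniformModule R (U' i) :=
    fun i => uniform_of_equiv (Submodule.comapSubtypeEquivOfLe (hUle i)).symm (huni i)
  have hU'ind : iSupIndep U' := by
    rw [iSupIndep_def]
    intro i
    rw [disjoint_iff, eq_bot_iff]
    rintro x ⟨hx1, hx2⟩
    have hx2' : (x : M) ∈ ⨆ (l) (_ : l ≠ i), U l := by
      have hle : (⨆ (l) (_ : l ≠ i), U' l) ≤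
          Submodule.comap E.subtype (⨆ (l) (_ : l ≠ i), U l) := by
        refine iSup₂_le fun l hl => ?_
        refine Submodule.comap_mono (le_biSup_ne U hl)
      exact hle hx2
    have : (x : M) ∈ U i ⊓ (⨆ (l) (_ : l ≠ i), U l) := ⟨hx1, hx2'⟩
    rw [(iSupIndep_def.1 hind i).eq_bot, Submodule.mem_bot] at this
    simpa [Submodule.mem_bot] using Subtype.ext (this.trans (by simp) : (x : M) = ((0 : E) : M))
  have hU'top : (⨆ i, U' i) = ⊤ := by
    apply Submodule.map_injective_of_injective hinj
    rw [Submodule.map_iSup, Submodule.map_top, Submodule.range_subtype]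
    exact iSup_congr hmapU
  have hW'ind : iSupIndep W' := by
    rw [iSupIndep_def]
    intro j
    rw [disjoint_iff, eq_bot_iff]
    rintro x ⟨hx1, hx2⟩
    have hx2' : (x : M) ∈ ⨆ (l) (_ : l ≠ j), W l := by
      have hle : (⨆ (l) (_ : l ≠ j), W' l) ≤
          Submodule.comap E.subtype (⨆ (l) (_ : l ≠ j), W l) := by
        refine iSup₂_le fun l hl => Submodule.comap_mono ?_
        exact inf_le_right.trans (le_biSup_ne W hl)
      exact hle hx2
    have : (x : M) ∈ W j ⊓ (⨆ (l) (_ : l ≠ j), W l) := ⟨hx1.2, hx2'⟩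
    rw [(iSupIndep_def.1 hW j).eq_bot, Submodule.mem_bot] at this
    simpa [Submodule.mem_bot] using Subtype.ext (this.trans (by simp) : (x : M) = ((0 : E) : M))
  obtain ⟨j, hj⟩ := UDaux n E U' hU'ind hU'uni hU'top W' hW'ind
  have : E ⊓ W j = ⊥ := by rw [← hmapW j, hj, Submodule.map_bot]
  exact hess (W j) (hex j) this

end PartA3



section PartB
variable {R : Type u} [Ring R]

lemma zeta_congr (α : Ordinal.{v}) :
    ∀ (M : Type v) [AddCommGroup M] [Module R M] (N : Type v) [AddCommGroup N] [Module R N],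
      (M ≃ₗ[R] N) → ModuleZeta R α M → ModuleZeta R α N := by
  induction α using Ordinal.induction with
  | h α IH =>
    intro M _ _ N _ _ e hM
    rw [ModuleZeta] at hM ⊢
    rcases hM with ⟨rfl, hu⟩ | ⟨hα, hsub⟩
    · exact Or.inl ⟨rfl, uniform_of_equiv e hu⟩
    · refine Or.inr ⟨hα, fun N' hN' hNiso => ?_⟩
      set M' := Submodule.comap (e : M →ₗ[R] N) N' with hM'
      have hmap : Submodule.map (e : M →ₗ[R] N) M' = N' :=
        Submodule.map_comap_eq_of_surjective e.surjective N'
      have eM' : (M' : Submodule R M) ≃ₗ[R] N' :=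
        (e.submoduleMap M').trans (LinearEquiv.ofEq _ _ hmap)
      have hM'0 : M' ≠ ⊥ := by
        intro hb
        apply hN'
        rw [← hmap, hb, Submodule.map_bot]
      have hM'iso : ¬ Nonempty (M' ≃ₗ[R] M) := by
        rintro ⟨f⟩
        exact hNiso ⟨(eM'.symm.trans f).trans e⟩
      obtain ⟨β, hβ, hz⟩ := hsub M' hM'0 hM'iso
      exact ⟨β, hβ, IH β hβ M' N' eM' hz⟩

lemma zeta_submodule {α : Ordinal.{v}} {M : Type v} [AddCommGroup M] [Module R M]
    (h : ModuleZeta R α M) (N : Submodule R M) (hN : N ≠ ⊥) :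
    ∃ β, β ≤ α ∧ ModuleZeta R β N := by
  rw [ModuleZeta] at h
  rcases h with ⟨rfl, hu⟩ | ⟨hα, hsub⟩
  · refine ⟨1, le_rfl, ?_⟩
    rw [ModuleZeta]
    refine Or.inl ⟨rfl, (uniform_submodule_iff N).2 ⟨hN, fun A B _ _ hA hB => hu.2 A B hA hB⟩⟩
  · by_cases hiso : Nonempty ((N : Submodule R M) ≃ₗ[R] M)
    · obtain ⟨f⟩ := hiso
      refine ⟨α, le_rfl, ?_⟩
      have := zeta_congr α M N f.symm
      apply this
      rw [ModuleZeta]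
      exact Or.inr ⟨hα, hsub⟩
    · obtain ⟨β, hβ, hz⟩ := hsub N hN hiso
      exact ⟨β, hβ.le, hz⟩

lemma iso_of_between {M : Type v} [AddCommGroup M] [Module R M] (hntM : Nontrivial M)
    (hcu : HasCUDim R M) (hnu : ¬ IsUniformModule R M)
    {A B : Submodule R M} (hAB : A ≤ B) (eA : Nonempty ((A : Submodule R M) ≃ₗ[R] M)) :
    Nonempty ((B : Submodule R M) ≃ₗ[R] M) := by
  by_contra hB
  set S := {α : Ordinal.{v} | ModuleZeta R α M} with hSdef
  have hne : S.Nonempty := hcu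
  have hα₀ : ModuleZeta R (sInf S) M := csInf_mem hne
  rw [ModuleZeta] at hα₀
  rcases hα₀ with ⟨_, hu⟩ | ⟨h1, hsub⟩
  · exact hnu hu
  obtain ⟨eA'⟩ := eA
  haveI hntA : Nontrivial (A : Submodule R M) := eA'.toEquiv.nontrivial
  have hA0 : A ≠ ⊥ := (subm_ne_bot_iff A).2 hntA
  have hB0 : B ≠ ⊥ := fun hb => hA0 (le_bot_iff.1 (hb ▸ hAB))
  obtain ⟨β, hβ, hzB⟩ := hsub B hB0 hB
  set A' := Submodule.comap B.subtype A with hA'def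
  have eA'' : (A' : Submodule R B) ≃ₗ[R] A := Submodule.comapSubtypeEquivOfLe hAB
  haveI hntA' : Nontrivial (A' : Submodule R B) := eA''.toEquiv.nontrivial
  have hA'0 : A' ≠ ⊥ := (subm_ne_bot_iff A').2 hntA'
  obtain ⟨γ, hγ, hzA'⟩ := zeta_submodule hzB A' hA'0
  have hzM : ModuleZeta R γ M := zeta_congr γ A' M (eA''.trans eA') hzA'
  have hle : sInf S ≤ γ := csInf_le' hzM
  exact absurd ((hle.trans hγ).trans_lt hβ) (lt_irrefl _)

end PartB



section PartC
variable {R : Type u} [Ring R]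

lemma essential_mono {M : Type v} [AddCommGroup M] [Module R M] {K K' : Submodule R M}
    (h : IsEssentialSubmodule R K) (hle : K ≤ K') : IsEssentialSubmodule R K' := by
  intro L hL hb
  apply h L hL
  rw [← le_bot_iff, ← hb]
  exact inf_le_inf_right L hle

lemma essential_inf {M : Type v} [AddCommGroup M] [Module R M] {K K' : Submodule R M}
    (h : IsEssentialSubmodule R K) (h' : IsEssentialSubmodule R K') :
    IsEssentialSubmodule R (K ⊓ K') := by
  intro L hL hb
  apply h (K' ⊓ L) (h' L hL)
  rw [← inf_assoc, hb]

lemma essential_comap {M : Type v} [AddCommGroup M] [Module R M]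
    {N : Type v} [AddCommGroup N] [Module R N] (f : M →ₗ[R] N) {K : Submodule R N}
    (hK : IsEssentialSubmodule R K) : IsEssentialSubmodule R (Submodule.comap f K) := by
  intro L hL
  rw [Submodule.ne_bot_iff]
  by_cases hmap : Submodule.map f L = ⊥
  · obtain ⟨x, hx, hx0⟩ := (Submodule.ne_bot_iff L).1 hL
    refine ⟨x, ⟨?_, hx⟩, hx0⟩
    have : f x ∈ Submodule.map f L := ⟨x, hx, rfl⟩
    rw [hmap, Submodule.mem_bot] at this
    simp [Submodule.mem_comap, this]
  · obtain ⟨y, ⟨hyK, x, hxL, rfl⟩, hy0⟩ := (Submodule.ne_bot_iff _).1 (hK _ hmap)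
    exact ⟨x, ⟨hyK, hxL⟩, fun h0 => hy0 (by rw [h0, map_zero])⟩

/-- The left annihilator of a ring element, as a left ideal. -/
def lAnn (R : Type u) [Ring R] (a : R) : Ideal R where
  carrier := {x | x * a = 0}
  add_mem' := by
    intro x y hx hy
    simp only [Set.mem_setOf_eq] at *
    rw [add_mul, hx, hy, add_zero]
  zero_mem' := by simp
  smul_mem' := by
    intro c x hx
    simp only [Set.mem_setOf_eq, smul_eq_mul] at *
    rw [mul_assoc, hx, mul_zero]

lemma mem_lAnn {a x : R} : x ∈ lAnn R a ↔ x * a = 0 := Iff.rfl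

lemma lAnn_isAnn (a : R) : IsAnnihilatorIdeal R (lAnn R a) := by
  refine ⟨{a}, ?_⟩
  ext x
  simp [mem_lAnn, Set.mem_setOf_eq]

variable (hacc : ∀ f : ℕ → Ideal R, (∀ n, IsAnnihilatorIdeal R (f n)) → Monotone f →
      ∃ n, ∀ k, n ≤ k → f k = f n)

include hacc in
lemma acc_max (S : Set (Ideal R)) (hS : ∀ I ∈ S, IsAnnihilatorIdeal R I)
    (hne : S.Nonempty) : ∃ I ∈ S, ∀ J ∈ S, I ≤ J → I = J := by
  by_contra hc
  push_neg at hc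
  have hstep : ∀ I : {I // I ∈ S}, ∃ J : {I // I ∈ S}, I.1 < J.1 := by
    rintro ⟨I, hI⟩
    obtain ⟨J, hJ, hle, hne'⟩ := hc I hI
    exact ⟨⟨J, hJ⟩, lt_of_le_of_ne hle hne'⟩
  choose g hg using hstep
  obtain ⟨I0, hI0⟩ := hne
  set f : ℕ → {I // I ∈ S} := fun n => g^[n] ⟨I0, hI0⟩ with hf
  have hmono : StrictMono fun n => (f n).1 := by
    apply strictMono_nat_of_lt_succ
    intro n
    have : f (n + 1) = g (f n) := by
      rw [hf]
      simp [Function.iterate_succ_apply']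
    rw [this]
    exact hg (f n)
  obtain ⟨n, hn⟩ := hacc (fun n => (f n).1) (fun n => hS _ (f n).2) hmono.monotone
  exact absurd (hn (n + 1) (Nat.le_succ n)) (hmono (Nat.lt_succ_self n)).ne'

include hacc in
lemma nilpotent_of_lAnn_essential {a : R} (ha : IsEssentialSubmodule R (lAnn R a)) :
    ∃ k : ℕ, 0 < k ∧ a ^ k = 0 := by
  have hmono : Monotone fun n : ℕ => lAnn R (a ^ (n + 1)) := by
    apply monotone_nat_of_le_succ
    intro n x hx
    rw [mem_lAnn] at *
    rw [pow_succ, ← mul_assoc, hx, zero_mul]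
  obtain ⟨n, hn⟩ := hacc _ (fun n => lAnn_isAnn (a ^ (n + 1))) hmono
  refine ⟨n + 1, Nat.succ_pos n, ?_⟩
  by_contra h0
  have hspan : Submodule.span R {a ^ (n + 1)} ≠ ⊥ := by
    simpa [Submodule.span_singleton_eq_bot] using h0
  obtain ⟨z, ⟨hz1, hz2⟩, hz0⟩ := (Submodule.ne_bot_iff _).1 (ha _ hspan)
  obtain ⟨b, rfl⟩ := Submodule.mem_span_singleton.1 hz2
  have hb : b ∈ lAnn R (a ^ (n + 1 + 1)) := by
    rw [mem_lAnn, pow_succ, ← mul_assoc]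
    simpa [smul_eq_mul] using mem_lAnn.1 hz1
  rw [hn (n + 1) (Nat.le_succ n)] at hb
  exact hz0 (by simpa [smul_eq_mul] using mem_lAnn.1 hb)

include hacc in
lemma no_nil_left_ideal (hsp : IsSemiprimeRing R) (N : Ideal R)
    (hnil : ∀ x ∈ N, ∃ k : ℕ, 0 < k ∧ x ^ k = 0) : N = ⊥ := by
  by_contra hN
  obtain ⟨a0, ha0N, ha00⟩ := (Submodule.ne_bot_iff N).1 hN
  set S : Set (Ideal R) := {I | ∃ x, x ∈ N ∧ x ≠ 0 ∧ I = lAnn R x} with hSdef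
  obtain ⟨I, ⟨a, haN, ha0, rfl⟩, hmax⟩ :=
    acc_max hacc S (by rintro I ⟨x, _, _, rfl⟩; exact lAnn_isAnn x)
      ⟨lAnn R a0, a0, ha0N, ha00, rfl⟩
  have key : ∀ x : R, a * x * a = 0 := by
    intro x
    by_contra haxa
    set s := x * a with hs
    have hsN : s ∈ N := N.smul_mem x haN
    obtain ⟨m, hm0, hm⟩ := hnil s hsN
    have hasN : ∀ k : ℕ, a * s ^ k ∈ N := by
      intro k
      cases k with
      | zero => simpa using haN
      | succ k =>
          have hsk : s ^ (k + 1) ∈ N := by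
            have : s ^ (k + 1) = s ^ k • s := by rw [smul_eq_mul, pow_succ]
            rw [this]
            exact N.smul_mem _ hsN
          have : a * s ^ (k + 1) = a • s ^ (k + 1) := rfl
          rw [this]
          exact N.smul_mem _ hsk
    have hP1 : a * s ≠ 0 := by rw [hs, ← mul_assoc]; exact haxa
    have hex : ∃ j, a * s ^ j = 0 := ⟨m, by rw [hm, mul_zero]⟩
    classical
    set j := Nat.find hex with hjdef
    have hj0 : a * s ^ j = 0 := Nat.find_spec hex
    have hjne0 : j ≠ 0 := by
      intro h; rw [h, pow_zero, mul_one] at hj0; exact ha0 hj0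
    have hjne1 : j ≠ 1 := by
      intro h; rw [h, pow_one] at hj0; exact hP1 hj0
    set k := j - 1 with hkdef
    have hkj : k + 1 = j := by omega
    have hPk : a * s ^ k ≠ 0 := Nat.find_min hex (by omega)
    have hle : lAnn R a ≤ lAnn R (a * s ^ k) := by
      intro y hy
      rw [mem_lAnn] at hy ⊢
      rw [← mul_assoc, hy, zero_mul]
    have heq : lAnn R a = lAnn R (a * s ^ k) :=
      hmax _ ⟨a * s ^ k, hasN k, hPk, rfl⟩ hle
    have hax : a * x ∈ lAnn R (a * s ^ k) := by
      rw [mem_lAnn]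
      have hcalc : a * x * (a * s ^ k) = a * s ^ (k + 1) := by
        rw [pow_succ', hs]
        rw [← mul_assoc a (x * a) (s ^ k), ← mul_assoc a x a, mul_assoc (a * x) a (s ^ k)]
      rw [hcalc, hkj]
      exact hj0
    rw [← heq, mem_lAnn] at hax
    exact haxa hax
  exact ha0 (hsp a key)

include hacc in
lemma singular_eq_bot (hsp : IsSemiprimeRing R) :
    ∀ a : R, IsEssentialSubmodule R (lAnn R a) → a = 0 := by
  have hZmem : ∀ (a b : R), IsEssentialSubmodule R (lAnn R a) →
      IsEssentialSubmodule R (lAnn R b) → IsEssentialSubmodule R (lAnn R (a + b)) := by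
    intro a b ha hb
    refine essential_mono (essential_inf ha hb) ?_
    rintro x ⟨hxa, hxb⟩
    rw [mem_lAnn] at *
    rw [mul_add, hxa, hxb, add_zero]
  have hZsmul : ∀ (c a : R), IsEssentialSubmodule R (lAnn R a) →
      IsEssentialSubmodule R (lAnn R (c * a)) := by
    intro c a ha
    have hcomap := essential_comap (LinearMap.toSpanSingleton R R c) ha
    refine essential_mono hcomap ?_
    intro x hx
    rw [Submodule.mem_comap, LinearMap.toSpanSingleton_apply, smul_eq_mul, mem_lAnn] at hx
    rw [mem_lAnn, ← mul_assoc]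
    exact hx
  set Z : Ideal R :=
    { carrier := {a | IsEssentialSubmodule R (lAnn R a)}
      add_mem' := fun {a b} ha hb => hZmem a b ha hb
      zero_mem' := by
        have h0 : lAnn R (0 : R) = ⊤ := by ext x; simp [mem_lAnn]
        intro K hK
        rw [h0, top_inf_eq]
        exact hK
      smul_mem' := fun c a ha => hZsmul c a ha } with hZ
  intro a ha
  have hZbot : Z = ⊥ := by
    refine no_nil_left_ideal hacc hsp Z ?_
    intro x hx
    exact nilpotent_of_lAnn_essential hacc hx
  have : a ∈ Z := ha
  rw [hZbot, Submodule.mem_bot] at this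
  exact this

include hacc in
lemma exists_good_elt (hsp : IsSemiprimeRing R) (I : Ideal R) (hI : I ≠ ⊥) :
    ∃ a ∈ I, a ≠ 0 ∧ ∀ b : R, b * a * a = 0 → b * a = 0 := by
  -- I is not nil
  have hnotnil : ∃ x ∈ I, ∀ k : ℕ, 0 < k → x ^ k ≠ 0 := by
    by_contra hc
    push_neg at hc
    apply hI
    refine no_nil_left_ideal hacc hsp I ?_
    intro x hx
    obtain ⟨k, hk, hk0⟩ := hc x hx
    exact ⟨k, hk, hk0⟩
  obtain ⟨x0, hx0I, hx0⟩ := hnotnil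
  set S : Set (Ideal R) := {J | ∃ x, x ∈ I ∧ (∀ k : ℕ, 0 < k → x ^ k ≠ 0) ∧ J = lAnn R x} with hS
  obtain ⟨J, ⟨a, haI, hapow, rfl⟩, hmax⟩ :=
    acc_max hacc S (by rintro J ⟨x, _, _, rfl⟩; exact lAnn_isAnn x)
      ⟨lAnn R x0, x0, hx0I, hx0, rfl⟩
  refine ⟨a, haI, by simpa using hapow 1 one_pos, fun b hb => ?_⟩
  have haa : ∀ k : ℕ, 0 < k → (a * a) ^ k ≠ 0 := by
    intro k hk h0
    apply hapow (2 * k) (by omega)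
    rw [pow_mul, pow_two]
    exact h0
  have haaI : a * a ∈ I := I.smul_mem a haI
  have hle : lAnn R a ≤ lAnn R (a * a) := by
    intro y hy
    rw [mem_lAnn] at hy ⊢
    rw [← mul_assoc, hy, zero_mul]
  have heq : lAnn R a = lAnn R (a * a) := hmax _ ⟨a * a, haaI, haa, rfl⟩ hle
  have : b ∈ lAnn R (a * a) := by
    rw [mem_lAnn, ← mul_assoc]
    exact hb
  rw [← heq, mem_lAnn] at this
  exact this

end PartC

section PartD
variable {R : Type u} [Ring R]

/-- The set of left combinations `∑ x j * a j` over a finite index set. -/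
def combSpan (a : ℕ → R) (s : Finset ℕ) : Ideal R where
  carrier := {z | ∃ x : ℕ → R, z = ∑ j ∈ s, x j * a j}
  zero_mem' := ⟨0, by simp⟩
  add_mem' := by
    rintro y z ⟨xy, rfl⟩ ⟨xz, rfl⟩
    refine ⟨fun j => xy j + xz j, ?_⟩
    rw [← Finset.sum_add_distrib]
    exact Finset.sum_congr rfl fun j _ => by rw [add_mul]
  smul_mem' := by
    rintro c z ⟨x, rfl⟩
    refine ⟨fun j => c * x j, ?_⟩
    rw [smul_eq_mul, Finset.mul_sum]
    exact Finset.sum_congr rfl fun j _ => by rw [mul_assoc]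

def GoodSeq (E : Ideal R) (k : ℕ) (a : ℕ → R) : Prop :=
  (∀ i, i < k → a i ∈ E ∧ a i ≠ 0 ∧ ∀ b : R, b * a i * a i = 0 → b * a i = 0) ∧
  (∀ i j, i < j → j < k → a j * a i = 0)

lemma goodSeq_sum {E : Ideal R} {k : ℕ} {a : ℕ → R} (hg : GoodSeq E k a) :
    ∀ (x : ℕ → R), (∑ i ∈ Finset.range k, x i * a i) = 0 → ∀ i, i < k → x i * a i = 0 := by
  suffices h : ∀ d m, m + d = k → ∀ x : ℕ → R, (∑ i ∈ Finset.Ico m k, x i * a i) = 0 →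
      ∀ i, m ≤ i → i < k → x i * a i = 0 by
    intro x hx i hi
    exact h k 0 (zero_add k) x (by rw [← Finset.range_eq_Ico]; exact hx) i (Nat.zero_le i) hi
  intro d
  induction d with
  | zero => intro m hm x hx i h1 h2; omega
  | succ d IH =>
      intro m hm x hx i h1 h2
      have hmk : m < k := by omega
      rw [Finset.sum_eq_sum_Ico_succ_bot hmk] at hx
      have hsum0 : (∑ i ∈ Finset.Ico (m + 1) k, x i * a i * a m) = 0 := by
        refine Finset.sum_eq_zero fun j hj => ?_
        rw [Finset.mem_Ico] at hj
        rw [mul_assoc, hg.2 m j (by omega) hj.2, mul_zero]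
      have hxm : x m * a m = 0 := by
        have h1' : (x m * a m + ∑ i ∈ Finset.Ico (m + 1) k, x i * a i) * a m = 0 := by
          rw [hx, zero_mul]
        rw [add_mul, Finset.sum_mul, hsum0, add_zero] at h1'
        exact (hg.1 m hmk).2.2 (x m) h1'
      rcases eq_or_lt_of_le h1 with rfl | hlt
      · exact hxm
      · refine IH (m + 1) (by omega) x ?_ i hlt h2
        rw [hxm, zero_add] at hx
        exact hx

lemma exists_regular
    (hacc : ∀ f : ℕ → Ideal R, (∀ n, IsAnnihilatorIdeal R (f n)) → Monotone f →
      ∃ n, ∀ k, n ≤ k → f k = f n)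
    (hsp : IsSemiprimeRing R) {n : ℕ} (hud : HasFiniteUniformDim R R n)
    {E : Ideal R} (hE : IsEssentialSubmodule R E) :
    ∃ c ∈ E, lAnn R c = ⊥ := by
  classical
  by_contra hno
  push_neg at hno
  have hbuild : ∀ k, ∃ a : ℕ → R, GoodSeq E k a := by
    intro k
    induction k with
    | zero =>
        exact ⟨fun _ => 0, fun i hi => absurd hi (by omega), fun i j _ h => absurd h (by omega)⟩
    | succ k IH =>
        obtain ⟨a, hg⟩ := IH
        set K : Ideal R := ⨅ i ∈ Finset.range k, lAnn R (a i) with hKdef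
        have hK0 : K ≠ ⊥ := by
          intro hb
          set c : R := ∑ i ∈ Finset.range k, a i with hc
          have hcE : c ∈ E := Submodule.sum_mem E fun i hi => (hg.1 i (Finset.mem_range.1 hi)).1
          refine hno c hcE ?_
          rw [eq_bot_iff]
          intro y hy
          rw [mem_lAnn, hc, Finset.mul_sum] at hy
          have hall := goodSeq_sum hg (fun _ => y) hy
          have hyK : y ∈ K := by
            rw [hKdef]
            refine (Submodule.mem_iInf _).2 fun i => (Submodule.mem_iInf _).2 fun hi => ?_
            exact mem_lAnn.2 (hall i (Finset.mem_range.1 hi))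
          rw [hb] at hyK
          exact hyK
        obtain ⟨b, hbEK, hb0, hbgood⟩ := exists_good_elt hacc hsp (E ⊓ K) (hE K hK0)
        refine ⟨Function.update a k b, fun i hi => ?_, fun i j hij hj => ?_⟩
        · rcases Nat.lt_succ_iff_lt_or_eq.1 hi with h | rfl
          · rw [Function.update_of_ne (by omega)]; exact hg.1 i h
          · rw [Function.update_self]; exact ⟨hbEK.1, hb0, hbgood⟩
        · rcases Nat.lt_succ_iff_lt_or_eq.1 hj with h | rfl
          · rw [Function.update_of_ne (by omega : i ≠ k), Function.update_of_ne (by omega : j ≠ k)]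
            exact hg.2 i j hij h
          · rw [Function.update_self, Function.update_of_ne (by omega : i ≠ j)]
            have hbK : b ∈ K := hbEK.2
            rw [hKdef] at hbK
            have := (Submodule.mem_iInf _).1 hbK i
            have hbAnn := (Submodule.mem_iInf _).1 this (Finset.mem_range.2 hij)
            exact mem_lAnn.1 hbAnn
  obtain ⟨a, hg⟩ := hbuild (n + 1)
  set W : Fin (n + 1) → Ideal R := fun i => Submodule.span R {a i.val} with hWdef
  have hWind : iSupIndep W := by
    rw [iSupIndep_def]
    intro i
    rw [disjoint_iff, eq_bot_iff]
    rintro z ⟨hz1, hz2⟩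
    obtain ⟨xi, rfl⟩ := Submodule.mem_span_singleton.1 hz1
    set s : Finset ℕ := (Finset.range (n + 1)).erase i.val with hsdef
    have hle : (⨆ (l) (_ : l ≠ i), W l) ≤ combSpan a s := by
      refine iSup₂_le fun l hl => ?_
      intro w hw
      obtain ⟨xl, rfl⟩ := Submodule.mem_span_singleton.1 hw
      refine ⟨fun j => if j = l.val then xl else 0, ?_⟩
      have hls : l.val ∈ s := by
        rw [hsdef, Finset.mem_erase]
        exact ⟨fun h => hl (Fin.val_injective h), Finset.mem_range.2 l.isLt⟩
      rw [smul_eq_mul]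
      rw [show (∑ j ∈ s, (if j = l.val then xl else 0) * a j)
          = ∑ j ∈ s, (if j = l.val then xl * a j else 0) from
        Finset.sum_congr rfl fun j _ => by split <;> simp]
      rw [Finset.sum_ite_eq' s l.val fun j => xl * a j, if_pos hls]
    obtain ⟨x, hxeq⟩ := hle hz2
    set y : ℕ → R := fun j => if j = i.val then xi else -(x j) with hydef
    have hysum : (∑ j ∈ Finset.range (n + 1), y j * a j) = 0 := by
      rw [← Finset.add_sum_erase _ _ (Finset.mem_range.2 i.isLt)]
      have h1 : y i.val * a i.val = xi * a i.val := by rw [hydef]; simp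
      have h2 : (∑ j ∈ (Finset.range (n + 1)).erase i.val, y j * a j)
          = -(∑ j ∈ s, x j * a j) := by
        rw [← Finset.sum_neg_distrib]
        refine Finset.sum_congr rfl fun j hj => ?_
        have hji : j ≠ i.val := (Finset.mem_erase.1 hj).1
        rw [hydef]
        simp [hji, neg_mul]
      rw [h1, h2, ← hxeq]
      rw [smul_eq_mul] at hxeq ⊢
      rw [hxeq]
      exact add_neg_cancel _
    have := goodSeq_sum hg y hysum i.val i.isLt
    rw [hydef] at this
    simp only [if_pos rfl] at this
    rw [Submodule.mem_bot, smul_eq_mul]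
    exact this
  obtain ⟨i, hi⟩ := udim_bound hud W hWind
  have : a i.val = 0 := by
    rw [hWdef] at hi
    exact Submodule.span_singleton_eq_bot.1 hi
  exact (hg.1 i.val i.isLt).2.1 this

end PartD


/-- A semiprime Goldie ring with couniserial dimension and uniform dimension
`n` decomposes as a direct sum of `n` uniform ideals. -/
theorem stmt13 (R : Type u) [Ring R] (n : ℕ)
    (hsp : IsSemiprimeRing R) (hg : IsGoldieRing R) (h : HasCUDim R R)
    (hn : HasFiniteUniformDim R R n) :
    ∃ V : Fin n → Ideal R, DirectSum.IsInternal V ∧ ∀ i, IsUniformModule R (V i) := by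
  classical
  obtain ⟨U, hUind, hUuni, hUess⟩ := hn
  by_cases htriv : Subsingleton R
  · -- trivial ring : necessarily n = 0
    rcases n with _ | m
    · refine ⟨fun i => i.elim0, ?_, fun i => i.elim0⟩
      rw [DirectSum.isInternal_submodule_iff_iSupIndep_and_iSup_eq_top]
      haveI : Subsingleton (Submodule R R) := Submodule.subsingleton_iff R |>.2 htriv
      exact ⟨fun i => i.elim0, Subsingleton.elim _ _⟩
    · exfalso
      haveI : Subsingleton (U 0) := ⟨fun a b => Subtype.ext (Subsingleton.elim _ _)⟩
      obtain ⟨x, y, hxy⟩ := (hUuni 0).1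
      exact hxy (Subsingleton.elim x y)
  haveI hnt : Nontrivial R := not_subsingleton_iff_nontrivial.1 htriv
  by_cases huni : IsUniformModule R R
  · -- uniform case : n = 1 and R itself is uniform
    have hn1 : n = 1 := by
      rcases n with _ | n
      · exfalso
        have hbot : (⨆ i : Fin 0, U i) = ⊥ := le_antisymm (iSup_le fun i => i.elim0) bot_le
        have htop : (⊤ : Ideal R) ≠ ⊥ := by
          intro hb
          have h1 : (1 : R) ∈ (⊤ : Ideal R) := trivial
          rw [hb, Submodule.mem_bot] at h1
          exact one_ne_zero h1
        have := hUess ⊤ htop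
        rw [hbot, bot_inf_eq] at this
        exact this rfl
      rcases n with _ | n
      · rfl
      · exfalso
        have h10 : (1 : Fin (n + 2)) ≠ 0 := by
          intro hh
          have := congrArg Fin.val hh
          simp [Fin.val_one] at this
        have hle : U 1 ≤ ⨆ (j) (_ : j ≠ (0 : Fin (n + 2))), U j := le_biSup_ne U h10
        have hdisj : U 0 ⊓ U 1 = ⊥ :=
          le_bot_iff.1 ((le_inf inf_le_left (inf_le_right.trans hle)).trans
            ((iSupIndep_def.1 hUind 0).eq_bot).le)
        exact huni.2 (U 0) (U 1) ((subm_ne_bot_iff _).2 (hUuni 0).1)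
          ((subm_ne_bot_iff _).2 (hUuni 1).1) hdisj
    subst hn1
    refine ⟨fun _ => ⊤, ?_, fun _ => uniform_of_equiv (Submodule.topEquiv (R := R) (M := R)).symm huni⟩
    rw [DirectSum.isInternal_submodule_iff_iSupIndep_and_iSup_eq_top]
    constructor
    · rw [iSupIndep_def]
      intro i
      have hbot : (⨆ (j : Fin 1) (_ : j ≠ i), (⊤ : Ideal R)) = ⊥ :=
        le_antisymm (iSup₂_le fun j hj => absurd (Subsingleton.elim j i) hj) bot_le
      rw [hbot]
      exact disjoint_bot_right
    · exact le_antisymm le_top (le_iSup (fun _ : Fin 1 => (⊤ : Ideal R)) 0)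
  · -- non-uniform case : use the regular element and couniserial dimension
    set E : Ideal R := ⨆ i, U i with hE
    obtain ⟨c, hcE, hcAnn⟩ :=
      exists_regular hg.1 hsp (⟨U, hUind, hUuni, hUess⟩ : HasFiniteUniformDim R R n) hUess
    set A : Ideal R := Submodule.span R {c} with hA
    have hAle : A ≤ E := (Submodule.span_singleton_le_iff_mem c E).2 hcE
    -- R ≃ A
    have eA : Nonempty ((A : Ideal R) ≃ₗ[R] R) := by
      set f : R →ₗ[R] R := LinearMap.toSpanSingleton R R c with hf
      have hker : LinearMap.ker f = ⊥ := by
        rw [eq_bot_iff]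
        intro x hx
        rw [LinearMap.mem_ker, hf, LinearMap.toSpanSingleton_apply, smul_eq_mul] at hx
        have : x ∈ lAnn R c := mem_lAnn.2 hx
        rw [hcAnn] at this
        exact this
      have hrange : LinearMap.range f = A := (LinearMap.span_singleton_eq_range R R c).symm
      have e1 : R ≃ₗ[R] LinearMap.range f :=
        LinearEquiv.ofInjective f (LinearMap.ker_eq_bot.1 hker)
      exact ⟨((e1.trans (LinearEquiv.ofEq _ _ hrange)).symm)⟩
    obtain ⟨e⟩ := iso_of_between hnt h huni hAle eA
    -- transport the decomposition of E to R
    have hUle : ∀ i, U i ≤ E := fun i => le_iSup U i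
    set U' : Fin n → Submodule R E := fun i => Submodule.comap E.subtype (U i) with hU'
    have hmapU : ∀ i, Submodule.map E.subtype (U' i) = U i := fun i => by
      rw [hU', Submodule.map_comap_subtype, inf_eq_right.2 (hUle i)]
    have hinj : Function.Injective E.subtype := Subtype.coe_injective
    have hU'top : (⨆ i, U' i) = ⊤ := by
      apply Submodule.map_injective_of_injective hinj
      rw [Submodule.map_iSup, Submodule.map_top, Submodule.range_subtype]
      exact iSup_congr hmapU
    have hU'ind : iSupIndep U' := by
      rw [iSupIndep_def]
      intro i
      rw [disjoint_iff, eq_bot_iff]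
      rintro x ⟨hx1, hx2⟩
      have hx2' : (x : R) ∈ ⨆ (l) (_ : l ≠ i), U l := by
        have hle2 : (⨆ (l) (_ : l ≠ i), U' l) ≤
            Submodule.comap E.subtype (⨆ (l) (_ : l ≠ i), U l) :=
          iSup₂_le fun l hl => Submodule.comap_mono (le_biSup_ne U hl)
        exact hle2 hx2
      have hmem : (x : R) ∈ U i ⊓ (⨆ (l) (_ : l ≠ i), U l) := ⟨hx1, hx2'⟩
      rw [(iSupIndep_def.1 hUind i).eq_bot, Submodule.mem_bot] at hmem
      simpa [Submodule.mem_bot] using Subtype.ext (hmem.trans (by simp) : (x : R) = ((0 : E) : R))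
    set V : Fin n → Ideal R := fun i => Submodule.map (e : E →ₗ[R] R) (U' i) with hV
    refine ⟨V, ?_, ?_⟩
    · rw [DirectSum.isInternal_submodule_iff_iSupIndep_and_iSup_eq_top]
      constructor
      · rw [iSupIndep_def]
        intro i
        rw [disjoint_iff, eq_bot_iff]
        rintro x ⟨hx1, hx2⟩
        obtain ⟨a, ha, rfl⟩ := hx1
        have hx2' : (⨆ (l) (_ : l ≠ i), V l) = Submodule.map (e : E →ₗ[R] R) (⨆ (l) (_ : l ≠ i), U' l) := by
          rw [Submodule.map_iSup]
          exact iSup_congr fun l => by rw [Submodule.map_iSup]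
        rw [hx2'] at hx2
        obtain ⟨b, hb, hab⟩ := hx2
        have hba : b = a := e.injective hab
        have : a ∈ U' i ⊓ (⨆ (l) (_ : l ≠ i), U' l) := ⟨ha, hba ▸ hb⟩
        rw [(iSupIndep_def.1 hU'ind i).eq_bot, Submodule.mem_bot] at this
        rw [Submodule.mem_bot, this, map_zero]
      · have : (⨆ i, V i) = Submodule.map (e : E →ₗ[R] R) (⨆ i, U' i) := by
          rw [Submodule.map_iSup]
        rw [this, hU'top, Submodule.map_top, LinearEquiv.range]
    · intro i
      have e2 : (U i : Submodule R R) ≃ₗ[R] V i :=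
        (Submodule.comapSubtypeEquivOfLe (hUle i)).symm.trans (e.submoduleMap (U' i))
      exact uniform_of_equiv e2 (hUuni i)
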